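/- Let M : ℕ × ℕ → ℝ induce a bounded operator on ℓ² and admit an LU-factorization M = LU (entrywise, L lower triangular, U upper triangular, the defining sums having finitely many nonzero terms) such that L and U have lower- respectively upper-triangular two-sided entrywise inverses L⁻¹ and U⁻¹, and such that L, U, L⁻¹, U⁻¹ all induce bounded operators on ℓ². Let F ∈ ℓ², let λ := M⁻¹ F ∈ ℓ² (M is invertible on ℓ² since M = LU with bounded invertible factors), let (N_ℓ)_{ℓ∈ℕ} be strictly increasing in ℕ, and for each ℓ let λ(ℓ) ∈ ℓ² be a Galerkin solution of level ℓ, i.e. λ(ℓ)_i = 0 for i > N_ℓ and (Mλ(ℓ))_i = F_i for 1 ≤ i ≤ N_ℓ. Then (Uλ(ℓ))_i = (Uλ)_i for all 1 ≤ i ≤ N_ℓ and (Uλ(ℓ))_i = 0 for all i > N_ℓ; consequently, for every ℓ ∈ ℕ, (‖U‖₂‖U⁻¹‖₂)⁻² ‖λ − λ(ℓ)‖²_{ℓ²} ≤ Σ_{k=ℓ}^{∞} ‖λ(k+1) − λ(k)‖²_{ℓ²} ≤ (‖U‖₂‖U⁻¹‖₂)² ‖λ − λ(ℓ)‖²_{ℓ²}.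 -/

import Mathlib

abbrev Mat := ℕ → ℕ → ℝ

noncomputable def mulVec (M : Mat) (x : ℕ → ℝ) : ℕ → ℝ := fun i => ∑' j, M i j * x j

def Memℓ2 (x : ℕ → ℝ) : Prop := Summable fun i => x i ^ 2

noncomputable def l2norm (x : ℕ → ℝ) : ℝ := Real.sqrt (∑' i, x i ^ 2)

def BoundedWith (M : Mat) (K : ℝ) : Prop :=
  ∀ x : ℕ → ℝ, Memℓ2 x →
    (∀ i, Summable fun j => |M i j * x j|) ∧ Memℓ2 (mulVec M x) ∧
      l2norm (mulVec M x) ≤ K * l2norm x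

def IsBoundedOp (M : Mat) : Prop := ∃ K : ℝ, 0 ≤ K ∧ BoundedWith M K

noncomputable def opNorm (M : Mat) : ℝ := sInf {K : ℝ | 0 ≤ K ∧ BoundedWith M K}

def LowerTri (M : Mat) : Prop := ∀ i j, i < j → M i j = 0

def UpperTri (M : Mat) : Prop := ∀ i j, j < i → M i j = 0

def idMat : Mat := fun p q => if p = q then 1 else 0

lemma memℓ2_sub {x y : ℕ → ℝ} (hx : Memℓ2 x) (hy : Memℓ2 y) :
    Memℓ2 (fun i => x i - y i) := by
  refine Summable.of_nonneg_of_le (fun i => sq_nonneg _)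
    (fun i => ?_) (((hx.mul_left 2).add (hy.mul_left 2)))
  have : (x i - y i) ^ 2 ≤ 2 * x i ^ 2 + 2 * y i ^ 2 := by nlinarith [sq_nonneg (x i + y i)]
  simpa using this

lemma l2norm_nonneg (x : ℕ → ℝ) : 0 ≤ l2norm x := Real.sqrt_nonneg _

lemma l2norm_sq {x : ℕ → ℝ} : l2norm x ^ 2 = ∑' i, x i ^ 2 :=
  Real.sq_sqrt (tsum_nonneg fun i => sq_nonneg _)

lemma abs_le_l2norm {x : ℕ → ℝ} (hx : Memℓ2 x) (i : ℕ) : |x i| ≤ l2norm x := by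
  rw [← Real.sqrt_sq_eq_abs (x i)]
  exact Real.sqrt_le_sqrt (Summable.le_tsum hx i fun j _ => sq_nonneg _)

lemma eq_zero_of_l2norm_eq_zero {x : ℕ → ℝ} (hx : Memℓ2 x) (h : l2norm x = 0)
    (i : ℕ) : x i = 0 := by
  have := abs_le_l2norm hx i
  rw [h] at this
  exact abs_eq_zero.mp (le_antisymm this (abs_nonneg _))

lemma opNorm_nonneg {M : Mat} : 0 ≤ opNorm M :=
  Real.sInf_nonneg (fun K hK => hK.1)

lemma rows_summable {M : Mat} (h : IsBoundedOp M) {x : ℕ → ℝ} (hx : Memℓ2 x) (i : ℕ) :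
    Summable fun j => M i j * x j := by
  obtain ⟨K, _, hb⟩ := h
  exact Summable.of_abs ((hb x hx).1 i)

lemma mulVec_memℓ2 {M : Mat} (h : IsBoundedOp M) {x : ℕ → ℝ} (hx : Memℓ2 x) :
    Memℓ2 (mulVec M x) := by
  obtain ⟨K, _, hb⟩ := h
  exact (hb x hx).2.1

lemma le_opNorm {M : Mat} (h : IsBoundedOp M) {x : ℕ → ℝ} (hx : Memℓ2 x) :
    l2norm (mulVec M x) ≤ opNorm M * l2norm x := by
  obtain ⟨K, hK0, hb⟩ := h
  by_cases hx0 : l2norm x = 0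
  · have : ∀ i, mulVec M x i = 0 := by
      intro i
      have : ∀ j, M i j * x j = 0 := fun j => by
        rw [eq_zero_of_l2norm_eq_zero hx hx0 j, mul_zero]
      simp [mulVec, this]
    rw [hx0, mul_zero]
    simp only [l2norm]
    rw [show (∑' i, mulVec M x i ^ 2) = 0 by simp [this], Real.sqrt_zero]
  · have hxpos : 0 < l2norm x := lt_of_le_of_ne (l2norm_nonneg x) (Ne.symm hx0)
    rw [← div_le_iff₀ hxpos] at *
    refine le_csInf ⟨K, hK0, hb⟩ ?_
    rintro b ⟨hb0, hbB⟩
    rw [div_le_iff₀ hxpos]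
    exact (hbB x hx).2.2

lemma mulVec_sub {M : Mat} (h : IsBoundedOp M) {x y : ℕ → ℝ}
    (hx : Memℓ2 x) (hy : Memℓ2 y) :
    mulVec M (fun i => x i - y i) = fun i => mulVec M x i - mulVec M y i := by
  funext i
  simp only [mulVec]
  rw [← Summable.tsum_sub (rows_summable h hx i) (rows_summable h hy i)]
  congr 1; funext j; ring

lemma sq_tsum_le {a b : ℕ → ℝ} {c : ℝ} (ha : Memℓ2 a) (hc : 0 ≤ c)
    (h : l2norm a ≤ c * l2norm b) : (∑' i, a i ^ 2) ≤ c ^ 2 * ∑' i, b i ^ 2 := by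
  have h2 : l2norm a ^ 2 ≤ (c * l2norm b) ^ 2 :=
    pow_le_pow_left₀ (l2norm_nonneg a) h 2
  rw [mul_pow] at h2
  rw [← l2norm_sq]
  calc l2norm a ^ 2 ≤ c ^ 2 * l2norm b ^ 2 := h2
  _ = c ^ 2 * ∑' i, b i ^ 2 := by rw [l2norm_sq]

lemma diag_ne_zero {A B : Mat} (hA : LowerTri A) (hB : LowerTri B)
    (hAB : ∀ p q, (∑' r, A p r * B r q) = idMat p q) (p : ℕ) :
    A p p ≠ 0 := by
  have h := hAB p p
  rw [tsum_eq_single p (fun r hr => ?_)] at h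
  · intro h0
    rw [h0, zero_mul] at h
    simp [idMat] at h
  · rcases lt_or_gt_of_ne hr with h1 | h1
    · rw [hB r p h1, mul_zero]
    · rw [hA p r h1, zero_mul]

lemma diag_ne_zero' {A B : Mat} (hA : UpperTri A) (hB : UpperTri B)
    (hAB : ∀ p q, (∑' r, A p r * B r q) = idMat p q) (p : ℕ) :
    A p p ≠ 0 := by
  have h := hAB p p
  rw [tsum_eq_single p (fun r hr => ?_)] at h
  · intro h0
    rw [h0, zero_mul] at h
    simp [idMat] at h
  · rcases lt_or_gt_of_ne hr with h1 | h1
    · rw [hA p r h1, zero_mul]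
    · rw [hB r p h1, mul_zero]

noncomputable def delta (p : ℕ) : ℕ → ℝ := fun i => if i = p then 1 else 0

lemma delta_memℓ2 (p : ℕ) : Memℓ2 (delta p) := by
  apply summable_of_finite_support
  apply Set.Finite.subset (Set.finite_singleton p)
  intro i hi
  rcases eq_or_ne i p with h | h
  · simp [h]
  · simp only [Function.mem_support, delta] at hi
    simp [h] at hi

lemma mulVec_delta (M : Mat) (p i : ℕ) : mulVec M (delta p) i = M i p := by
  simp only [mulVec]
  rw [tsum_eq_single p (fun r hr => by simp [delta, hr])]
  simp [delta]

lemma opNorm_pos_of_diag {A : Mat} (hAb : IsBoundedOp A)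
    (hdiag : ∀ p, A p p ≠ 0) : 0 < opNorm A := by
  rcases lt_or_eq_of_le (opNorm_nonneg (M := A)) with h | h
  · exact h
  · exfalso
    have hle := le_opNorm hAb (delta_memℓ2 0)
    rw [← h, zero_mul] at hle
    have h0 : l2norm (mulVec A (delta 0)) = 0 :=
      le_antisymm hle (l2norm_nonneg _)
    have := eq_zero_of_l2norm_eq_zero (mulVec_memℓ2 hAb (delta_memℓ2 0)) h0 0
    rw [mulVec_delta] at this
    exact hdiag 0 this

lemma mulVec_LU_finite {L U M : Mat} (hL : LowerTri L)
    (hLU : ∀ p q, M p q = ∑' r, L p r * U r q) (hUb : IsBoundedOp U)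
    {x : ℕ → ℝ} (hx : Memℓ2 x) (i : ℕ) :
    mulVec M x i = ∑ r ∈ Finset.range (i + 1), L i r * mulVec U x r := by
  have hrow : ∀ j, M i j * x j
      = ∑ r ∈ Finset.range (i + 1), L i r * (U r j * x j) := by
    intro j
    rw [hLU i j, tsum_eq_sum (s := Finset.range (i + 1)) (fun r hr => by
      rw [hL i r (by simpa using hr), zero_mul])]
    rw [Finset.sum_mul]
    congr 1; funext r; ring
  simp only [mulVec]
  calc (∑' j, M i j * x j)
      = ∑' j, ∑ r ∈ Finset.range (i + 1), L i r * (U r j * x j) := by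
        congr 1; funext j; exact hrow j
    _ = ∑ r ∈ Finset.range (i + 1), ∑' j, L i r * (U r j * x j) :=
        Summable.tsum_finsetSum (fun r _ => (rows_summable hUb hx r).mul_left _)
    _ = ∑ r ∈ Finset.range (i + 1), L i r * ∑' j, U r j * x j := by
        congr 1; funext r; exact tsum_mul_left

lemma mulVecU_zero_of_Me_zero {L U M : Mat} (hL : LowerTri L)
    (hdiag : ∀ p, L p p ≠ 0)
    (hLU : ∀ p q, M p q = ∑' r, L p r * U r q) (hUb : IsBoundedOp U)
    {e : ℕ → ℝ} (he : Memℓ2 e) {n : ℕ}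
    (hMe : ∀ i, i < n → mulVec M e i = 0) :
    ∀ i, i < n → mulVec U e i = 0 := by
  intro i
  induction i using Nat.strong_induction_on with
  | _ i ih =>
    intro hi
    have h := hMe i hi
    rw [mulVec_LU_finite hL hLU hUb he i, Finset.sum_range_succ] at h
    have hz : ∑ r ∈ Finset.range i, L i r * mulVec U e r = 0 := by
      apply Finset.sum_eq_zero
      intro r hr
      rw [ih r (Finset.mem_range.mp hr) (lt_trans (Finset.mem_range.mp hr) hi), mul_zero]
    rw [hz, zero_add] at h
    exact (mul_eq_zero.mp h).resolve_left (hdiag i)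

lemma mulVec_eq_sum_of_support {M : Mat} {x : ℕ → ℝ} {n : ℕ}
    (hx : ∀ j, n ≤ j → x j = 0) (i : ℕ) :
    mulVec M x i = ∑ j ∈ Finset.range n, M i j * x j := by
  simp only [mulVec]
  exact tsum_eq_sum (fun j hj => by rw [hx j (by simpa using hj), mul_zero])

lemma UinvU_finite {U Uinv : Mat} (hU : UpperTri U)
    (hUinvU : ∀ p q, (∑' r, Uinv p r * U r q) = idMat p q)
    {x : ℕ → ℝ} {n : ℕ} (hx : ∀ j, n ≤ j → x j = 0) :
    mulVec Uinv (mulVec U x) = x := by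
  have hUx0 : ∀ j, n ≤ j → mulVec U x j = 0 := by
    intro j hj
    rw [mulVec_eq_sum_of_support hx j]
    apply Finset.sum_eq_zero
    intro r hr
    rw [hU j r (lt_of_lt_of_le (Finset.mem_range.mp hr) hj), zero_mul]
  funext i
  rw [mulVec_eq_sum_of_support hUx0 i]
  have hstep : ∀ j, Uinv i j * mulVec U x j
      = ∑ r ∈ Finset.range n, Uinv i j * (U j r * x r) := by
    intro j
    rw [mulVec_eq_sum_of_support hx j, Finset.mul_sum]
  calc (∑ j ∈ Finset.range n, Uinv i j * mulVec U x j)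
      = ∑ j ∈ Finset.range n, ∑ r ∈ Finset.range n, Uinv i j * (U j r * x r) :=
        Finset.sum_congr rfl (fun j _ => hstep j)
    _ = ∑ r ∈ Finset.range n, ∑ j ∈ Finset.range n, Uinv i j * (U j r * x r) :=
        Finset.sum_comm
    _ = ∑ r ∈ Finset.range n, (∑ j ∈ Finset.range n, Uinv i j * U j r) * x r := by
        congr 1; funext r; rw [Finset.sum_mul]; congr 1; funext j; ring
    _ = ∑ r ∈ Finset.range n, idMat i r * x r := by
        apply Finset.sum_congr rfl
        intro r hr
        congr 1
        rw [← hUinvU i r]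
        exact (tsum_eq_sum (fun j hj => by
          rw [hU j r (lt_of_lt_of_le (Finset.mem_range.mp hr) (by simpa using hj)), mul_zero])).symm
    _ = x i := by
        rcases lt_or_ge i n with hin | hin
        · rw [Finset.sum_eq_single i (fun r _ hr => by simp [idMat, (Ne.symm hr)])
            (fun h => absurd (Finset.mem_range.mpr hin) h)]
          simp [idMat]
        · rw [hx i hin]
          apply Finset.sum_eq_zero
          intro r hr
          have : i ≠ r := fun h => absurd (h ▸ Finset.mem_range.mp hr) (not_lt.mpr (h ▸ hin))
          simp [idMat, this]

noncomputable def trunc (x : ℕ → ℝ) (n : ℕ) : ℕ → ℝ := fun i => if i < n then x i else 0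

lemma trunc_memℓ2 {x : ℕ → ℝ} (hx : Memℓ2 x) (n : ℕ) : Memℓ2 (trunc x n) := by
  refine Summable.of_nonneg_of_le (fun i => sq_nonneg _) (fun i => ?_) hx
  simp only [trunc]
  split
  · exact le_refl _
  · simpa using sq_nonneg (x i)

lemma trunc_support (x : ℕ → ℝ) (n : ℕ) : ∀ j, n ≤ j → trunc x n j = 0 := by
  intro j hj
  simp [trunc, not_lt.mpr hj]

lemma tail_eq {x : ℕ → ℝ} (hx : Memℓ2 x) (n : ℕ) :
    (∑' i, (x i - trunc x n i) ^ 2) = (∑' i, x i ^ 2) - ∑ i ∈ Finset.range n, x i ^ 2 := by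
  have hg : Summable (fun i => if i < n then x i ^ 2 else 0) := by
    refine Summable.of_nonneg_of_le (fun i => ?_) (fun i => ?_) hx
    · split <;> simp [sq_nonneg]
    · split
      · exact le_refl _
      · simpa using sq_nonneg (x i)
  have key : ∀ i, (x i - trunc x n i) ^ 2 = x i ^ 2 - (if i < n then x i ^ 2 else 0) := by
    intro i
    simp only [trunc]
    split <;> ring
  calc (∑' i, (x i - trunc x n i) ^ 2)
      = ∑' i, (x i ^ 2 - (if i < n then x i ^ 2 else 0)) := by
        congr 1; funext i; exact key i
    _ = (∑' i, x i ^ 2) - ∑' i, (if i < n then x i ^ 2 else 0) := Summable.tsum_sub hx hg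
    _ = (∑' i, x i ^ 2) - ∑ i ∈ Finset.range n, x i ^ 2 := by
        congr 1
        rw [tsum_eq_sum (s := Finset.range n) (fun i hi => by
          simp [not_lt.mp (by simpa using hi)])]
        exact Finset.sum_congr rfl (fun i hi => by simp [Finset.mem_range.mp hi])

lemma tail_tendsto {x : ℕ → ℝ} (hx : Memℓ2 x) :
    Filter.Tendsto (fun n => ∑' i, (x i - trunc x n i) ^ 2) Filter.atTop (nhds 0) := by
  have h1 : Filter.Tendsto (fun n => ∑ i ∈ Finset.range n, x i ^ 2)
      Filter.atTop (nhds (∑' i, x i ^ 2)) := hx.hasSum.tendsto_sum_nat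
  have h2 := Filter.Tendsto.const_sub (∑' i, x i ^ 2) h1
  rw [sub_self] at h2
  refine h2.congr (fun n => ?_)
  exact (tail_eq hx n).symm

lemma UinvU_id {U Uinv : Mat} (hU : UpperTri U)
    (hUinvU : ∀ p q, (∑' r, Uinv p r * U r q) = idMat p q)
    (hUb : IsBoundedOp U) (hUinvb : IsBoundedOp Uinv)
    {y : ℕ → ℝ} (hy : Memℓ2 y) (i : ℕ) :
    mulVec Uinv (mulVec U y) i = y i := by
  set c := |mulVec Uinv (mulVec U y) i - y i| with hc
  have key : ∀ n, i < n → c ≤ opNorm Uinv * (opNorm U *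
      Real.sqrt (∑' j, (y j - trunc y n j) ^ 2)) := by
    intro n hin
    have htr2 := trunc_memℓ2 hy n
    have hfin : mulVec Uinv (mulVec U (trunc y n)) i = trunc y n i := by
      rw [UinvU_finite hU hUinvU (trunc_support y n)]
    have hdiff : mulVec Uinv (mulVec U y) i - y i
        = mulVec Uinv (mulVec U (fun j => y j - trunc y n j)) i := by
      have h1 : mulVec U (fun j => y j - trunc y n j)
          = fun j => mulVec U y j - mulVec U (trunc y n) j := mulVec_sub hUb hy htr2
      have h2 : mulVec Uinv (fun j => mulVec U y j - mulVec U (trunc y n) j)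
          = fun j => mulVec Uinv (mulVec U y) j - mulVec Uinv (mulVec U (trunc y n)) j :=
        mulVec_sub hUinvb (mulVec_memℓ2 hUb hy) (mulVec_memℓ2 hUb htr2)
      rw [h1, h2]
      simp only [hfin]
      rw [show trunc y n i = y i by simp [trunc, hin]]
    rw [hc, hdiff]
    have hsub := memℓ2_sub hy htr2
    calc |mulVec Uinv (mulVec U (fun j => y j - trunc y n j)) i|
        ≤ l2norm (mulVec Uinv (mulVec U (fun j => y j - trunc y n j))) :=
          abs_le_l2norm (mulVec_memℓ2 hUinvb (mulVec_memℓ2 hUb hsub)) i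
      _ ≤ opNorm Uinv * l2norm (mulVec U (fun j => y j - trunc y n j)) :=
          le_opNorm hUinvb (mulVec_memℓ2 hUb hsub)
      _ ≤ opNorm Uinv * (opNorm U * l2norm (fun j => y j - trunc y n j)) := by
          apply mul_le_mul_of_nonneg_left (le_opNorm hUb hsub) opNorm_nonneg
      _ = opNorm Uinv * (opNorm U * Real.sqrt (∑' j, (y j - trunc y n j) ^ 2)) := rfl
  have hlim : Filter.Tendsto (fun n => opNorm Uinv * (opNorm U *
      Real.sqrt (∑' j, (y j - trunc y n j) ^ 2))) Filter.atTop (nhds 0) := by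
    have hs : Filter.Tendsto (fun n => Real.sqrt (∑' j, (y j - trunc y n j) ^ 2))
        Filter.atTop (nhds 0) := by
      have := (Real.continuous_sqrt.tendsto 0).comp (tail_tendsto hy)
      simpa [Function.comp_def] using this
    have := (hs.const_mul (opNorm U)).const_mul (opNorm Uinv)
    simpa using this
  have hle : c ≤ 0 := by
    refine ge_of_tendsto hlim ?_
    filter_upwards [Filter.eventually_gt_atTop i] with n hn
    exact key n hn
  have : c = 0 := le_antisymm hle (abs_nonneg _)
  have := abs_eq_zero.mp this
  linarith [this]


/-- telescoping quasi-orthogonality from a bounded LU-factorization.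
If `M = LU` with bounded factors and bounded triangular inverses, `λ = M⁻¹F`, and
`λ(ℓ)` are the Galerkin solutions of level `ℓ`, then `Uλ(ℓ)` agrees with `Uλ` on the
first `N_ℓ` entries and vanishes beyond, and the telescoping sum of the increments is
two-sidedly comparable to the error, with constant `(‖U‖₂‖U⁻¹‖₂)²`. -/
theorem LU_telescoping_quasi_orthogonality
    (M L U Linv Uinv : Mat) (hMb : IsBoundedOp M)
    (hL : LowerTri L) (hU : UpperTri U)
    (hLU : ∀ p q, M p q = ∑' r, L p r * U r q)
    (hLinvT : LowerTri Linv) (hUinvT : UpperTri Uinv)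
    (hLLinv : ∀ p q, (∑' r, L p r * Linv r q) = idMat p q)
    (hLinvL : ∀ p q, (∑' r, Linv p r * L r q) = idMat p q)
    (hUUinv : ∀ p q, (∑' r, U p r * Uinv r q) = idMat p q)
    (hUinvU : ∀ p q, (∑' r, Uinv p r * U r q) = idMat p q)
    (hLb : IsBoundedOp L) (hUb : IsBoundedOp U)
    (hLinvb : IsBoundedOp Linv) (hUinvb : IsBoundedOp Uinv)
    (F : ℕ → ℝ) (hF : Memℓ2 F)
    (lam : ℕ → ℝ) (hlam : Memℓ2 lam) (hlamsol : mulVec M lam = F)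
    (N : ℕ → ℕ) (hN : StrictMono N)
    (lamh : ℕ → ℕ → ℝ) (hlamh2 : ∀ ℓ, Memℓ2 (lamh ℓ))
    (hlamh0 : ∀ ℓ i, N ℓ ≤ i → lamh ℓ i = 0)
    (hlamhsol : ∀ ℓ i, i < N ℓ → mulVec M (lamh ℓ) i = F i) :
    (∀ ℓ i, i < N ℓ → mulVec U (lamh ℓ) i = mulVec U lam i) ∧
    (∀ ℓ i, N ℓ ≤ i → mulVec U (lamh ℓ) i = 0) ∧
    ∀ ℓ : ℕ,
      (Summable fun k => ∑' i, (lamh (ℓ + k + 1) i - lamh (ℓ + k) i) ^ 2) ∧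
      ((opNorm U * opNorm Uinv) ^ 2)⁻¹ * (∑' i, (lam i - lamh ℓ i) ^ 2)
        ≤ (∑' k, ∑' i, (lamh (ℓ + k + 1) i - lamh (ℓ + k) i) ^ 2) ∧
      (∑' k, ∑' i, (lamh (ℓ + k + 1) i - lamh (ℓ + k) i) ^ 2)
        ≤ (opNorm U * opNorm Uinv) ^ 2 * (∑' i, (lam i - lamh ℓ i) ^ 2) := by
  have hLdiag : ∀ p, L p p ≠ 0 := diag_ne_zero hL hLinvT hLLinv
  have hUdiag : ∀ p, U p p ≠ 0 := diag_ne_zero' hU hUinvT hUUinv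
  have hUinvdiag : ∀ p, Uinv p p ≠ 0 := diag_ne_zero' hUinvT hU hUinvU
  have hUpos : 0 < opNorm U := opNorm_pos_of_diag hUb hUdiag
  have hUinvpos : 0 < opNorm Uinv := opNorm_pos_of_diag hUinvb hUinvdiag
  have part2 : ∀ ℓ i, N ℓ ≤ i → mulVec U (lamh ℓ) i = 0 := by
    intro ℓ i hi
    have hz : ∀ j, U i j * lamh ℓ j = 0 := by
      intro j
      rcases lt_or_ge j i with hj | hj
      · rw [hU i j hj, zero_mul]
      · rw [hlamh0 ℓ j (le_trans hi hj), mul_zero]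
    simp only [mulVec]
    calc (∑' j, U i j * lamh ℓ j) = ∑' _ : ℕ, (0 : ℝ) := by
          congr 1; funext j; exact hz j
      _ = 0 := tsum_zero
  have part1 : ∀ ℓ i, i < N ℓ → mulVec U (lamh ℓ) i = mulVec U lam i := by
    intro ℓ i hi
    have he2 : Memℓ2 (fun j => lam j - lamh ℓ j) := memℓ2_sub hlam (hlamh2 ℓ)
    have hMe : ∀ i, i < N ℓ → mulVec M (fun j => lam j - lamh ℓ j) i = 0 := by
      intro i hi
      rw [mulVec_sub hMb hlam (hlamh2 ℓ)]
      simp only []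
      rw [hlamsol, hlamhsol ℓ i hi, sub_self]
    have hUe := mulVecU_zero_of_Me_zero hL hLdiag hLU hUb he2 hMe i hi
    rw [mulVec_sub hUb hlam (hlamh2 ℓ)] at hUe
    simp only [] at hUe
    linarith
  refine ⟨part1, part2, ?_⟩
  intro ℓ
  have hUlamh : ∀ k, mulVec U (lamh k)
      = fun i => if i < N k then mulVec U lam i else 0 := by
    intro k; funext i
    by_cases hi : i < N k
    · simp only [if_pos hi]; exact part1 k i hi
    · simp only [if_neg hi]; exact part2 k i (not_lt.mp hi)
  have hdsupp : ∀ k j, N (k + 1) ≤ j → lamh (k + 1) j - lamh k j = 0 := by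
    intro k j hj
    rw [hlamh0 (k + 1) j hj, hlamh0 k j (le_trans (hN.monotone (Nat.le_succ k)) hj), sub_self]
  have hd2 : ∀ k, Memℓ2 (fun j => lamh (k + 1) j - lamh k j) :=
    fun k => memℓ2_sub (hlamh2 (k + 1)) (hlamh2 k)
  have hUd2 : ∀ k, Memℓ2 (mulVec U (fun j => lamh (k + 1) j - lamh k j)) :=
    fun k => mulVec_memℓ2 hUb (hd2 k)
  -- block sums
  have hb : ∀ k, (∑' i, (mulVec U (fun j => lamh (k + 1) j - lamh k j) i) ^ 2)
      = ∑ i ∈ Finset.Ico (N k) (N (k + 1)), mulVec U lam i ^ 2 := by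
    intro k
    rw [tsum_eq_sum (s := Finset.Ico (N k) (N (k + 1))) ?_]
    · apply Finset.sum_congr rfl
      intro i hi
      obtain ⟨h1, h2⟩ := Finset.mem_Ico.mp hi
      rw [mulVec_sub hUb (hlamh2 (k + 1)) (hlamh2 k)]
      simp only [hUlamh (k + 1), hUlamh k]
      simp [h2, not_lt.mpr h1]
    · intro i hi
      rw [Finset.mem_Ico, not_and_or, not_le, not_lt] at hi
      rw [mulVec_sub hUb (hlamh2 (k + 1)) (hlamh2 k)]
      simp only [hUlamh (k + 1), hUlamh k]
      rcases hi with hi | hi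
      · simp [hi, lt_of_lt_of_le hi (hN.monotone (Nat.le_succ k))]
      · simp [not_lt.mpr hi, not_lt.mpr (le_trans (hN.monotone (Nat.le_succ k)) hi)]
  -- error vector
  have he2 : Memℓ2 (fun j => lam j - lamh ℓ j) := memℓ2_sub hlam (hlamh2 ℓ)
  have hUe2 : Memℓ2 (mulVec U (fun j => lam j - lamh ℓ j)) := mulVec_memℓ2 hUb he2
  have hUeval : ∀ i, mulVec U (fun j => lam j - lamh ℓ j) i
      = if i < N ℓ then 0 else mulVec U lam i := by
    intro i
    rw [mulVec_sub hUb hlam (hlamh2 ℓ)]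
    simp only [hUlamh ℓ]
    by_cases hi : i < N ℓ <;> simp [hi]
  -- partial sums of the block series
  have hφ : ∀ k, (∑' i, (mulVec U (fun j => lamh (k + 1) j - lamh k j) i) ^ 2) ≥ 0 :=
    fun k => tsum_nonneg (fun i => sq_nonneg _)
  have hblock : ∀ k, (∑' i, (mulVec U (fun j => lamh (ℓ + k + 1) j - lamh (ℓ + k) j) i) ^ 2)
      = (∑ i ∈ Finset.range (N (ℓ + k + 1)), (mulVec U (fun j => lam j - lamh ℓ j) i) ^ 2)
        - ∑ i ∈ Finset.range (N (ℓ + k)), (mulVec U (fun j => lam j - lamh ℓ j) i) ^ 2 := by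
    intro k
    rw [hb (ℓ + k), ← Finset.sum_Ico_eq_sub _ (hN.monotone (Nat.le_succ (ℓ + k)))]
    apply Finset.sum_congr rfl
    intro i hi
    obtain ⟨h1, _⟩ := Finset.mem_Ico.mp hi
    rw [hUeval i, if_neg (not_lt.mpr (le_trans (hN.monotone (Nat.le_add_right ℓ k)) h1))]
  have hS : ∀ K, (∑ k ∈ Finset.range K,
        ∑' i, (mulVec U (fun j => lamh (ℓ + k + 1) j - lamh (ℓ + k) j) i) ^ 2)
      = ∑ i ∈ Finset.range (N (ℓ + K)), (mulVec U (fun j => lam j - lamh ℓ j) i) ^ 2 := by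
    intro K
    have := Finset.sum_range_sub (f := fun k =>
      ∑ i ∈ Finset.range (N (ℓ + k)), (mulVec U (fun j => lam j - lamh ℓ j) i) ^ 2) K
    simp only [← add_assoc] at this
    rw [Finset.sum_congr rfl (fun k _ => hblock k), this]
    have hz : (∑ i ∈ Finset.range (N (ℓ + 0)), (mulVec U (fun j => lam j - lamh ℓ j) i) ^ 2)
        = 0 := by
      apply Finset.sum_eq_zero
      intro i hi
      rw [hUeval i, if_pos (by simpa using Finset.mem_range.mp hi)]
      simp
    rw [hz, sub_zero]
  have htendΦ : Filter.Tendsto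
      (fun n => ∑ i ∈ Finset.range n, (mulVec U (fun j => lam j - lamh ℓ j) i) ^ 2)
      Filter.atTop (nhds (∑' i, (mulVec U (fun j => lam j - lamh ℓ j) i) ^ 2)) :=
    hUe2.hasSum.tendsto_sum_nat
  have htendN : Filter.Tendsto (fun K => N (ℓ + K)) Filter.atTop Filter.atTop := by
    apply Filter.tendsto_atTop_mono (fun K => le_trans (Nat.le_add_left K ℓ) hN.le_apply)
    exact Filter.tendsto_id
  have htendS : Filter.Tendsto (fun K => ∑ k ∈ Finset.range K,
        ∑' i, (mulVec U (fun j => lamh (ℓ + k + 1) j - lamh (ℓ + k) j) i) ^ 2)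
      Filter.atTop (nhds (∑' i, (mulVec U (fun j => lam j - lamh ℓ j) i) ^ 2)) := by
    refine (htendΦ.comp htendN).congr (fun K => ?_)
    exact (hS K).symm
  have hBsum : Summable (fun k =>
      ∑' i, (mulVec U (fun j => lamh (ℓ + k + 1) j - lamh (ℓ + k) j) i) ^ 2) := by
    apply summable_of_sum_range_le (c := ∑' i, (mulVec U (fun j => lam j - lamh ℓ j) i) ^ 2)
      (fun k => hφ (ℓ + k))
    intro K
    rw [hS K]
    exact Summable.sum_le_tsum _ (fun i _ => sq_nonneg _) hUe2
  have hBtsum : (∑' k, ∑' i, (mulVec U (fun j => lamh (ℓ + k + 1) j - lamh (ℓ + k) j) i) ^ 2)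
      = ∑' i, (mulVec U (fun j => lam j - lamh ℓ j) i) ^ 2 :=
    tendsto_nhds_unique hBsum.hasSum.tendsto_sum_nat htendS
  -- per-level inequalities
  have hak : ∀ k, (∑' i, (lamh (k + 1) i - lamh k i) ^ 2)
      ≤ opNorm Uinv ^ 2 * ∑' i, (mulVec U (fun j => lamh (k + 1) j - lamh k j) i) ^ 2 := by
    intro k
    refine sq_tsum_le (hd2 k) hUinvpos.le ?_
    have hid : mulVec Uinv (mulVec U (fun j => lamh (k + 1) j - lamh k j))
        = fun j => lamh (k + 1) j - lamh k j :=
      UinvU_finite hU hUinvU (hdsupp k)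
    calc l2norm (fun i => lamh (k + 1) i - lamh k i)
        = l2norm (mulVec Uinv (mulVec U (fun j => lamh (k + 1) j - lamh k j))) := by rw [hid]
      _ ≤ opNorm Uinv * l2norm (mulVec U (fun j => lamh (k + 1) j - lamh k j)) :=
          le_opNorm hUinvb (hUd2 k)
  have hbk : ∀ k, (∑' i, (mulVec U (fun j => lamh (k + 1) j - lamh k j) i) ^ 2)
      ≤ opNorm U ^ 2 * ∑' i, (lamh (k + 1) i - lamh k i) ^ 2 :=
    fun k => sq_tsum_le (hUd2 k) hUpos.le (le_opNorm hUb (hd2 k))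
  have hAsum : Summable fun k => ∑' i, (lamh (ℓ + k + 1) i - lamh (ℓ + k) i) ^ 2 := by
    refine Summable.of_nonneg_of_le (fun k => tsum_nonneg (fun i => sq_nonneg _))
      (fun k => hak (ℓ + k)) (hBsum.mul_left (opNorm Uinv ^ 2))
  have hAleT : (∑' k, ∑' i, (lamh (ℓ + k + 1) i - lamh (ℓ + k) i) ^ 2)
      ≤ opNorm Uinv ^ 2 * ∑' i, (mulVec U (fun j => lam j - lamh ℓ j) i) ^ 2 := by
    calc (∑' k, ∑' i, (lamh (ℓ + k + 1) i - lamh (ℓ + k) i) ^ 2)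
        ≤ ∑' k, opNorm Uinv ^ 2 *
            ∑' i, (mulVec U (fun j => lamh (ℓ + k + 1) j - lamh (ℓ + k) j) i) ^ 2 :=
          Summable.tsum_le_tsum (fun k => hak (ℓ + k)) hAsum (hBsum.mul_left _)
      _ = opNorm Uinv ^ 2 * ∑' k,
            ∑' i, (mulVec U (fun j => lamh (ℓ + k + 1) j - lamh (ℓ + k) j) i) ^ 2 :=
          tsum_mul_left
      _ = opNorm Uinv ^ 2 * ∑' i, (mulVec U (fun j => lam j - lamh ℓ j) i) ^ 2 := by
          rw [hBtsum]
  have hTleA : (∑' i, (mulVec U (fun j => lam j - lamh ℓ j) i) ^ 2)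
      ≤ opNorm U ^ 2 * ∑' k, ∑' i, (lamh (ℓ + k + 1) i - lamh (ℓ + k) i) ^ 2 := by
    calc (∑' i, (mulVec U (fun j => lam j - lamh ℓ j) i) ^ 2)
        = ∑' k, ∑' i, (mulVec U (fun j => lamh (ℓ + k + 1) j - lamh (ℓ + k) j) i) ^ 2 :=
          hBtsum.symm
      _ ≤ ∑' k, opNorm U ^ 2 * ∑' i, (lamh (ℓ + k + 1) i - lamh (ℓ + k) i) ^ 2 :=
          Summable.tsum_le_tsum (fun k => hbk (ℓ + k)) hBsum (hAsum.mul_left _)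
      _ = opNorm U ^ 2 * ∑' k, ∑' i, (lamh (ℓ + k + 1) i - lamh (ℓ + k) i) ^ 2 :=
          tsum_mul_left
  -- error vs T
  have hEleT : (∑' i, (lam i - lamh ℓ i) ^ 2)
      ≤ opNorm Uinv ^ 2 * ∑' i, (mulVec U (fun j => lam j - lamh ℓ j) i) ^ 2 := by
    refine sq_tsum_le he2 hUinvpos.le ?_
    have hid : mulVec Uinv (mulVec U (fun j => lam j - lamh ℓ j))
        = fun j => lam j - lamh ℓ j := by
      funext i
      exact UinvU_id hU hUinvU hUb hUinvb he2 i
    calc l2norm (fun i => lam i - lamh ℓ i)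
        = l2norm (mulVec Uinv (mulVec U (fun j => lam j - lamh ℓ j))) := by rw [hid]
      _ ≤ opNorm Uinv * l2norm (mulVec U (fun j => lam j - lamh ℓ j)) :=
          le_opNorm hUinvb (mulVec_memℓ2 hUb he2)
  have hTleE : (∑' i, (mulVec U (fun j => lam j - lamh ℓ j) i) ^ 2)
      ≤ opNorm U ^ 2 * ∑' i, (lam i - lamh ℓ i) ^ 2 :=
    sq_tsum_le hUe2 hUpos.le (le_opNorm hUb he2)
  refine ⟨hAsum, ?_, ?_⟩
  · rw [inv_mul_le_iff₀ (by positivity)]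
    calc (∑' i, (lam i - lamh ℓ i) ^ 2)
        ≤ opNorm Uinv ^ 2 * ∑' i, (mulVec U (fun j => lam j - lamh ℓ j) i) ^ 2 := hEleT
      _ ≤ opNorm Uinv ^ 2 * (opNorm U ^ 2 *
            ∑' k, ∑' i, (lamh (ℓ + k + 1) i - lamh (ℓ + k) i) ^ 2) :=
          mul_le_mul_of_nonneg_left hTleA (by positivity)
      _ = (opNorm U * opNorm Uinv) ^ 2 *
            ∑' k, ∑' i, (lamh (ℓ + k + 1) i - lamh (ℓ + k) i) ^ 2 := by ring
  · calc (∑' k, ∑' i, (lamh (ℓ + k + 1) i - lamh (ℓ + k) i) ^ 2)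
        ≤ opNorm Uinv ^ 2 * ∑' i, (mulVec U (fun j => lam j - lamh ℓ j) i) ^ 2 := hAleT
      _ ≤ opNorm Uinv ^ 2 * (opNorm U ^ 2 * ∑' i, (lam i - lamh ℓ i) ^ 2) :=
          mul_le_mul_of_nonneg_left hTleE (by positivity)
      _ = (opNorm U * opNorm Uinv) ^ 2 * ∑' i, (lam i - lamh ℓ i) ^ 2 := by ring
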